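/- Define m as in the previous context (type (g,1), g ≥ 4, d = g+1). Then m satisfies the triangle axiom: for all (e,h,A), (e′,h′,A′), (e″,h″,A″) in the domain with A = A′ ∪ A″, A′ ∩ A″ = ∅, 2(h + 1 − (h′ + h″)) = e′ + e″ − e, and e, e′, e″ satisfying the strict triangle inequalities, one has 0 ≤ (m(e,h,A) − h) − ((m(e′,h′,A′) − h′) + (m(e″,h″,A″) − h″)) ≤ 1. -/
import Mathlib


/-- The stability domain `D_{g,1}` of vine-graph triples `(e,h,A)`, `A ⊆ {1}`. -/
def StabDom (g : ℤ) (e h : ℤ) (A : Finset (Fin 1)) : Prop :=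
  1 ≤ e ∧ e ≤ g + 1 ∧ 0 ≤ h ∧ h ≤ g + 1 - e ∧
    ¬(e = 2 ∧ h = 0 ∧ A = ∅) ∧ ¬(e = 2 ∧ h = g - 1 ∧ A = Finset.univ)

/-- The stability condition of Example exg1 (type `(g,1)`, degree `d = g+1`). -/
def mEx (g : ℤ) (e h : ℤ) (A : Finset (Fin 1)) : ℤ :=
  if e = 2 ∧ h = 0 ∧ A = Finset.univ then 0
  else if e = 3 ∧ h = 0 ∧ A = Finset.univ then 0
  else if e = 2 ∧ h = 1 ∧ A = Finset.univ then 1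
  else if g - 2 ≤ h then h + 1
  else h + (if A = Finset.univ then 1 else 0)



private lemma fin1_empty_ne_univ : ((∅ : Finset (Fin 1)) = Finset.univ) ↔ False := by decide

private lemma fin1_univ_ne_empty : ((Finset.univ : Finset (Fin 1)) = ∅) ↔ False := by decide

private lemma finset_fin1 (A : Finset (Fin 1)) : A = ∅ ∨ A = Finset.univ := by
  rcases A.eq_empty_or_nonempty with hA | ⟨x, hx⟩
  · exact Or.inl hA
  · exact Or.inr (Finset.eq_univ_of_forall fun y => by simpa [Subsingleton.elim y x] using hx)

private lemma mEx_empty (g e h : ℤ) : mEx g e h ∅ = if g - 2 ≤ h then h + 1 else h := by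
  simp only [mEx, fin1_empty_ne_univ, and_false, false_and, if_false, add_zero]

private lemma mEx_univ (g e h : ℤ) :
    mEx g e h Finset.univ = if e = 2 ∧ h = 0 then 0 else if e = 3 ∧ h = 0 then 0
      else if e = 2 ∧ h = 1 then 1 else h + 1 := by
  simp only [mEx, and_true]
  split_ifs <;> omega

set_option maxHeartbeats 2000000 in
/-- `mEx` satisfies the triangle axiom. -/
theorem mEx_triangle (g : ℤ) (hg : 4 ≤ g) :
    ∀ e h : ℤ, ∀ A : Finset (Fin 1), ∀ e' h' : ℤ, ∀ A' : Finset (Fin 1),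
      ∀ e'' h'' : ℤ, ∀ A'' : Finset (Fin 1),
      StabDom g e h A → StabDom g e' h' A' → StabDom g e'' h'' A'' →
      A = A' ∪ A'' → A' ∩ A'' = ∅ →
      2 * (h + 1 - (h' + h'')) = e' + e'' - e →
      e < e' + e'' → e' < e + e'' → e'' < e + e' →
      0 ≤ (mEx g e h A - h) - ((mEx g e' h' A' - h') + (mEx g e'' h'' A'' - h'')) ∧
        (mEx g e h A - h) - ((mEx g e' h' A' - h') + (mEx g e'' h'' A'' - h'')) ≤ 1 := by
  intro e h A e' h' A' e'' h'' A'' hD hD' hD'' hU hI hrel t1 t2 t3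
  obtain ⟨d1, d2, d3, d4, d5, d6⟩ := hD
  obtain ⟨p1, p2, p3, p4, p5, p6⟩ := hD'
  obtain ⟨q1, q2, q3, q4, q5, q6⟩ := hD''
  rcases finset_fin1 A with rfl|rfl <;> rcases finset_fin1 A' with rfl|rfl <;>
      rcases finset_fin1 A'' with rfl|rfl <;>
    simp only [fin1_empty_ne_univ, fin1_univ_ne_empty, Finset.union_empty, Finset.empty_union,
      Finset.union_self, Finset.inter_empty, Finset.empty_inter, Finset.inter_self,
      and_true, and_false, not_false_eq_true, not_true, iff_false] at hU hI d5 d6 p5 p6 q5 q6 <;>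
    simp only [mEx_empty, mEx_univ] <;>
    split_ifs <;> omega
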